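/- Let 0 ≤ ℓ < r be real numbers, let F(β) = a + bβ with a ≠ 0 and b ≠ 0, let G : ℝ → ℝ be concave on [ℓ, r] and piecewise linear on [ℓ, r] (there exist finitely many points ℓ = t₀ < t₁ < ⋯ < t_k = r such that G is affine on each [t_i, t_{i+1}]), and suppose F(β) ≥ G(β) > 0 for all β ∈ [ℓ, r]. Define P(β) = F(β)/G(β). If ℓ ≤ β⁻ < β⁺ ≤ r and P(β⁻) = P(β⁺), then P achieves its minimum over [ℓ, r] inside [β⁻, β⁺]: there exists β* ∈ [β⁻, β⁺] such that P(β*) ≤ P(β) for all β ∈ [ℓ, r]. -/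

import Mathlib

open Set

lemma myContinuousOn_union_closed {f : ℝ → ℝ} {s t : Set ℝ} (hs : IsClosed s)
    (ht : IsClosed t) (h1 : ContinuousOn f s) (h2 : ContinuousOn f t) :
    ContinuousOn f (s ∪ t) := by
  intro x hx
  have cs : ContinuousWithinAt f s x := by
    by_cases h : x ∈ s
    · exact h1 x h
    · exact continuousWithinAt_of_notMem_closure (by rwa [hs.closure_eq])
  have ct : ContinuousWithinAt f t x := by
    by_cases h : x ∈ t
    · exact h2 x h
    · exact continuousWithinAt_of_notMem_closure (by rwa [ht.closure_eq])
  exact cs.union ct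

lemma myPLcont (G : ℝ → ℝ) (k : ℕ) (t : Fin (k + 1) → ℝ) (hm : StrictMono t)
    (hpl : ∀ i : Fin k, ∃ p q : ℝ,
      ∀ β ∈ Set.Icc (t i.castSucc) (t i.succ), G β = p + q * β) :
    ∀ i : Fin (k + 1), ContinuousOn G (Set.Icc (t 0) (t i)) := by
  intro i
  induction i using Fin.induction with
  | zero => simp [Set.Icc_self, continuousOn_singleton]
  | succ j ih =>
      have h0 : t 0 ≤ t j.castSucc := hm.monotone (Fin.zero_le _)
      have hjs : t j.castSucc ≤ t j.succ := hm.monotone (Fin.castSucc_le_succ j)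
      have hun : Set.Icc (t 0) (t j.castSucc) ∪ Set.Icc (t j.castSucc) (t j.succ)
          = Set.Icc (t 0) (t j.succ) := Set.Icc_union_Icc_eq_Icc h0 hjs
      rw [← hun]
      obtain ⟨p, q, hpq⟩ := hpl j
      have hc2 : ContinuousOn G (Set.Icc (t j.castSucc) (t j.succ)) := by
        apply ContinuousOn.congr (f := fun β => p + q * β)
        · exact (continuous_const.add (continuous_const.mul continuous_id)).continuousOn
        · intro x hx; exact hpq x hx
      exact myContinuousOn_union_closed isClosed_Icc isClosed_Icc ih hc2

theorem fitness_min_between_equal_values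
    (ℓ r a b : ℝ) (hℓ : 0 ≤ ℓ) (hlr : ℓ < r) (ha : a ≠ 0) (hb : b ≠ 0)
    (G : ℝ → ℝ)
    (hGconc : ConcaveOn ℝ (Set.Icc ℓ r) G)
    (hGpl : ∃ (k : ℕ) (t : Fin (k + 1) → ℝ), StrictMono t ∧ t 0 = ℓ ∧ t (Fin.last k) = r ∧
        ∀ i : Fin k, ∃ p q : ℝ,
          ∀ β ∈ Set.Icc (t i.castSucc) (t i.succ), G β = p + q * β)
    (hFG : ∀ β ∈ Set.Icc ℓ r, G β ≤ a + b * β)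
    (hGpos : ∀ β ∈ Set.Icc ℓ r, 0 < G β)
    (P : ℝ → ℝ) (hP : ∀ β, P β = (a + b * β) / G β)
    (βm βp : ℝ) (h1 : ℓ ≤ βm) (h2 : βm < βp) (h3 : βp ≤ r)
    (heq : P βm = P βp) :
    ∃ βstar ∈ Set.Icc βm βp, ∀ β ∈ Set.Icc ℓ r, P βstar ≤ P β := by
  -- continuity of G on [ℓ, r]
  obtain ⟨k, t, hm, ht0, htl, hpl⟩ := hGpl
  have hGcont : ContinuousOn G (Set.Icc ℓ r) := by
    have := myPLcont G k t hm hpl (Fin.last k)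
    rwa [ht0, htl] at this
  have hmmem : βm ∈ Set.Icc ℓ r := ⟨h1, h2.le.trans h3⟩
  have hpmem : βp ∈ Set.Icc ℓ r := ⟨h1.trans h2.le, h3⟩
  have hsub : Set.Icc βm βp ⊆ Set.Icc ℓ r := Set.Icc_subset_Icc h1 h3
  have hGm := hGpos βm hmmem
  have hGp := hGpos βp hpmem
  set C := P βm with hC
  have hCpos : 0 < C := by
    rw [hC, hP]
    exact div_pos (lt_of_lt_of_le hGm (hFG βm hmmem)) hGm
  have hFm : a + b * βm = C * G βm := by
    rw [hC, hP]; field_simp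
  have hFp : a + b * βp = C * G βp := by
    rw [heq, hP]; field_simp
  have hd : (0:ℝ) < βp - βm := by linarith
  -- P ≤ C on [βm, βp]
  have keyA : ∀ x ∈ Set.Icc βm βp, a + b * x ≤ C * G x := by
    intro x hx
    set u := (βp - x) / (βp - βm) with hu
    set v := (x - βm) / (βp - βm) with hv
    have hu0 : 0 ≤ u := div_nonneg (by linarith [hx.2]) hd.le
    have hv0 : 0 ≤ v := div_nonneg (by linarith [hx.1]) hd.le
    have huv : u + v = 1 := by rw [hu, hv, ← add_div, div_eq_one_iff_eq hd.ne']; ring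
    have hxe : u * βm + v * βp = x := by rw [hu, hv, div_mul_eq_mul_div, div_mul_eq_mul_div, ← add_div, div_eq_iff hd.ne']; ring
    have hconc := hGconc.2 hmmem hpmem hu0 hv0 huv
    simp only [smul_eq_mul] at hconc
    rw [hxe] at hconc
    have e1 : a + b * x = u * (a + b * βm) + v * (a + b * βp) := by
      rw [← hxe]; linear_combination a * huv.symm
    rw [e1, hFm, hFp]
    calc u * (C * G βm) + v * (C * G βp) = C * (u * G βm + v * G βp) := by ring
    _ ≤ C * G x := by
        exact mul_le_mul_of_nonneg_left hconc hCpos.le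
  -- C * G x ≤ F x left of βm
  have keyL : ∀ x ∈ Set.Icc ℓ r, x ≤ βm → C * G x ≤ a + b * x := by
    intro x hx hxm
    have hd2 : (0:ℝ) < βp - x := by linarith
    set u := (βp - βm) / (βp - x) with hu
    set v := (βm - x) / (βp - x) with hv
    have hu0 : 0 < u := div_pos hd hd2
    have hv0 : 0 ≤ v := div_nonneg (by linarith) hd2.le
    have huv : u + v = 1 := by rw [hu, hv, ← add_div, div_eq_one_iff_eq hd2.ne']; ring
    have hxe : u * x + v * βp = βm := by rw [hu, hv, div_mul_eq_mul_div, div_mul_eq_mul_div, ← add_div, div_eq_iff hd2.ne']; ring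
    have hconc := hGconc.2 hx hpmem hu0.le hv0 huv
    simp only [smul_eq_mul] at hconc
    rw [hxe] at hconc
    have e1 : a + b * βm = u * (a + b * x) + v * (a + b * βp) := by
      rw [← hxe]; linear_combination a * huv.symm
    have e2 : u * (a + b * x) = C * G βm - v * (C * G βp) := by
      rw [← hFm, ← hFp, e1]; ring
    have e3 : C * (u * G x) ≤ u * (a + b * x) := by
      rw [e2]
      have := mul_le_mul_of_nonneg_left hconc hCpos.le
      nlinarith
    nlinarith
  -- C * G x ≤ F x right of βp
  have keyR : ∀ x ∈ Set.Icc ℓ r, βp ≤ x → C * G x ≤ a + b * x := by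
    intro x hx hxp
    have hd2 : (0:ℝ) < x - βm := by linarith
    set u := (x - βp) / (x - βm) with hu
    set v := (βp - βm) / (x - βm) with hv
    have hv0 : 0 < v := div_pos hd hd2
    have hu0 : 0 ≤ u := div_nonneg (by linarith) hd2.le
    have huv : u + v = 1 := by rw [hu, hv, ← add_div, div_eq_one_iff_eq hd2.ne']; ring
    have hxe : u * βm + v * x = βp := by rw [hu, hv, div_mul_eq_mul_div, div_mul_eq_mul_div, ← add_div, div_eq_iff hd2.ne']; ring
    have hconc := hGconc.2 hmmem hx hu0 hv0.le huv
    simp only [smul_eq_mul] at hconc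
    rw [hxe] at hconc
    have e1 : a + b * βp = u * (a + b * βm) + v * (a + b * x) := by
      rw [← hxe]; linear_combination a * huv.symm
    have e2 : v * (a + b * x) = C * G βp - u * (C * G βm) := by
      rw [← hFm, ← hFp, e1]; ring
    have e3 : C * (v * G x) ≤ v * (a + b * x) := by
      rw [e2]
      have := mul_le_mul_of_nonneg_left hconc hCpos.le
      nlinarith
    nlinarith
  -- minimizer of P on [βm, βp]
  have hPcont : ContinuousOn P (Set.Icc βm βp) := by
    have hPeq : P = fun β => (a + b * β) / G β := funext hP
    rw [hPeq]
    apply ContinuousOn.div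
    · exact (continuous_const.add (continuous_const.mul continuous_id)).continuousOn
    · exact hGcont.mono hsub
    · intro x hx; exact (hGpos x (hsub hx)).ne'
  obtain ⟨βstar, hstar, hmin⟩ := isCompact_Icc.exists_isMinOn
    (Set.nonempty_Icc.2 h2.le) hPcont
  refine ⟨βstar, hstar, ?_⟩
  intro β hβ
  have hstarC : P βstar ≤ C := hmin (Set.left_mem_Icc.2 h2.le)
  rcases le_or_gt β βm with hc | hc
  · have := keyL β hβ hc
    have hGβ := hGpos β hβ
    calc P βstar ≤ C := hstarC
    _ ≤ P β := by rw [hP]; rw [le_div_iff₀ hGβ]; linarith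
  rcases le_or_gt β βp with hc2 | hc2
  · exact hmin ⟨hc.le, hc2⟩
  · have := keyR β hβ hc2.le
    have hGβ := hGpos β hβ
    calc P βstar ≤ C := hstarC
    _ ≤ P β := by rw [hP]; rw [le_div_iff₀ hGβ]; linarith
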